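/- In a monomial algebra Λ there exists no overlap between any two co-elementary perfect paths. -/

import Mathlib

/-! Combinatorial model of a monomial algebra `Λ = KQ/I`.

A finite quiver is given by source and target maps on a type of arrows.
A (nontrivial) path is encoded as a nonempty list of composable arrows;
the admissible monomial ideal `I` is encoded by its set `F` of minimal
generating paths, and a path is zero in `Λ` iff it contains a member of
`F` as a contiguous subpath (infix). -/

/-- A quiver structure on arrow type `E` with vertex type `V`. -/
structure QuiverData (V E : Type) where
  src : E → V
  tgt : E → V

namespace QuiverData

variable {V E : Type} (Q : QuiverData V E)

/-- `l` is the list of arrows of a path of `Q`. -/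
def IsPath (l : List E) : Prop := l.Chain' fun a b => Q.tgt a = Q.src b

/-- Two paths are composable: the target of the first equals the source of
the second (vacuously true if one of them is trivial). -/
def Composable (l m : List E) : Prop :=
  ∀ a ∈ l.getLast?, ∀ b ∈ m.head?, Q.tgt a = Q.src b

end QuiverData

/-- A monomial algebra, encoded combinatorially: a finite quiver together with
the set `F` of minimal paths generating the admissible monomial ideal `I`. -/
structure MonomialData (V E : Type) extends QuiverData V E where
  F : Set (List E)
  F_path : ∀ f ∈ F, toQuiverData.IsPath f
  F_len : ∀ f ∈ F, 2 ≤ f.length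
  F_min : ∀ f ∈ F, ∀ g, g <:+: f → (∃ f' ∈ F, f' <:+: g) → g = f
  admissible : ∃ N, ∀ l, toQuiverData.IsPath l → N ≤ l.length → ∃ f ∈ F, f <:+: l

namespace MonomialData

variable {V E : Type} (M : MonomialData V E)

/-- The path `l` is zero in `Λ`. -/
def IsZero (l : List E) : Prop := ∃ f ∈ M.F, f <:+: l

/-- `l` is a path which is nonzero in `Λ`. -/
def Nonzero (l : List E) : Prop := M.toQuiverData.IsPath l ∧ ¬ M.IsZero l

/-- A perfect pair of nonzero nontrivial paths, after Chen–Shen–Zhou. -/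
def PerfectPair (p q : List E) : Prop :=
  p ≠ [] ∧ q ≠ [] ∧ M.Nonzero p ∧ M.Nonzero q ∧
  M.toQuiverData.Composable p q ∧ M.IsZero (p ++ q) ∧
  (∀ q', q' ≠ [] → M.Nonzero q' → M.toQuiverData.Composable p q' →
      M.IsZero (p ++ q') → q <+: q') ∧
  (∀ p', p' ≠ [] → M.Nonzero p' → M.toQuiverData.Composable p' q →
      M.IsZero (p' ++ q) → p <:+ p')

/-- A perfect path: a path appearing in a perfect path sequence
`(p₁, …, pₙ, pₙ₊₁ = p₁)`, encoded by a periodic sequence of paths each of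
whose consecutive pairs is perfect. -/
def IsPerfect (p : List E) : Prop :=
  ∃ (n : ℕ) (s : ℕ → List E), 0 < n ∧ s 0 = p ∧ (∀ i, s (i + n) = s i) ∧
    ∀ i, M.PerfectPair (s i) (s (i + 1))

/-- `c` is the underlying cycle associated with the perfect path `p`:
the shortest cycle `c` with `p₁ ⋯ pₙ = cˡ` for some `l > 0`, for a perfect
path sequence through `p`. -/
def IsUnderlyingCycleOf (c p : List E) : Prop :=
  ∃ (n : ℕ) (s : ℕ → List E), 0 < n ∧ s 0 = p ∧ (∀ i, s (i + n) = s i) ∧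
    (∀ i, M.PerfectPair (s i) (s (i + 1))) ∧
    (∃ l, 0 < l ∧ ((List.range n).map s).flatten = (List.replicate l c).flatten) ∧
    (∀ c' l', 0 < l' → ((List.range n).map s).flatten = (List.replicate l' c').flatten →
      c.length ≤ c'.length)


/-- There is an overlap between the perfect paths `p` and `q` (`p` overlaps `q`). -/
def Overlap (p q : List E) : Prop :=
  ∃ x p' q' : List E, x ≠ [] ∧ p = p' ++ x ∧ q = x ++ q' ∧
    M.Nonzero (p' ++ x ++ q') ∧ (p = q → p' ≠ [] ∧ q' ≠ [])

/-- An elementary perfect path: a source in the Hasse quiver of the left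
divisibility order `⪯` on perfect paths, i.e. it is not a proper left divisor
of any perfect path. -/
def Elementary (p : List E) : Prop :=
  M.IsPerfect p ∧ ¬ ∃ q, M.IsPerfect q ∧ p <+: q ∧ p ≠ q

/-- A co-elementary perfect path: a sink in the Hasse quiver of `⪯`, i.e.
no proper left divisor of it is perfect. -/
def CoElementary (p : List E) : Prop :=
  M.IsPerfect p ∧ ¬ ∃ q, M.IsPerfect q ∧ q <+: p ∧ q ≠ p

/-- There is an arrow `q ⟶ p` in the Hasse quiver of `(ℙ_Λ, ⪯)`:
`p ≺ q` and no perfect path lies strictly between them. -/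
def HasseArrowPrec (q p : List E) : Prop :=
  M.IsPerfect p ∧ M.IsPerfect q ∧ p <+: q ∧ p ≠ q ∧
    ¬ ∃ r, M.IsPerfect r ∧ p <+: r ∧ p ≠ r ∧ r <+: q ∧ r ≠ q

end MonomialData

/-- Two cycles are equivalent (agree up to cyclic permutation): each is a
subpath of a power of the other. -/
def CyclesEquiv {E : Type} (c d : List E) : Prop :=
  ∃ m k, 0 < m ∧ 0 < k ∧ c <:+: (List.replicate m d).flatten ∧
    d <:+: (List.replicate k c).flatten



namespace NoOverlapAux

open List

/-! ### Generic list lemmas -/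

theorem prefix_append_cancel {α : Type} {l a b : List α} (h : l ++ a <+: l ++ b) : a <+: b := by
  obtain ⟨t, ht⟩ := h
  rw [List.append_assoc] at ht
  exact ⟨t, List.append_cancel_left ht⟩

theorem suffix_append_cancel {α : Type} {a b l : List α} (h : a ++ l <:+ b ++ l) : a <:+ b := by
  obtain ⟨t, ht⟩ := h
  rw [← List.append_assoc] at ht
  exact ⟨t, List.append_cancel_right ht⟩

theorem infix_split {α : Type} {f a b : List α} (h : f <:+: a ++ b) :
    f <:+: a ∨ f <:+: b ∨
      ∃ u v, f = u ++ v ∧ u ≠ [] ∧ v ≠ [] ∧ u <:+ a ∧ v <+: b := by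
  obtain ⟨s, t, hst⟩ := h
  by_cases h1 : s.length + f.length ≤ a.length
  · left
    have hpre : s ++ f <+: a ++ b := ⟨t, by simpa [List.append_assoc] using hst⟩
    have hsa : s ++ f <+: a :=
      List.prefix_of_prefix_length_le hpre (a.prefix_append b) (by simpa using h1)
    exact ((List.suffix_append s f).isInfix).trans hsa.isInfix
  by_cases h2 : a.length ≤ s.length
  · right; left
    have hpre : a <+: s :=
      List.prefix_of_prefix_length_le (a.prefix_append b)
        ⟨f ++ t, by simpa [List.append_assoc] using hst⟩ h2
    obtain ⟨s', rfl⟩ := hpre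
    rw [List.append_assoc, List.append_assoc] at hst
    have hb := List.append_cancel_left hst
    exact ⟨s', t, by simpa [List.append_assoc] using hb⟩
  · right; right
    push_neg at h1 h2
    have hsa : s <+: a :=
      List.prefix_of_prefix_length_le ⟨f ++ t, by simpa [List.append_assoc] using hst⟩
        (a.prefix_append b) (le_of_lt h2)
    obtain ⟨u, rfl⟩ := hsa
    rw [List.append_assoc] at hst
    rw [List.append_assoc] at hst
    have h3 : f ++ t = u ++ b := List.append_cancel_left hst
    have hu : u.length < f.length := by
      have := h1
      rw [List.length_append] at this
      omega
    have hpf : u <+: f :=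
      List.prefix_of_prefix_length_le ⟨b, h3.symm⟩ (f.prefix_append t) (le_of_lt hu)
    obtain ⟨v, rfl⟩ := hpf
    have hv : v ≠ [] := by
      intro hv; rw [hv] at hu; simp at hu
    have hu0 : u ≠ [] := by
      intro h0
      rw [h0] at h2
      simp at h2
    refine ⟨u, v, rfl, hu0, hv, ⟨s, rfl⟩, ?_⟩
    rw [List.append_assoc] at h3
    exact ⟨t, List.append_cancel_left h3⟩

theorem getLast?_eq_of_suffix {α : Type} {b a : List α} (hb : b ≠ []) (hs : b <:+ a) :
    a.getLast? = b.getLast? := by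
  obtain ⟨s, rfl⟩ := hs; exact List.getLast?_append_of_ne_nil _ hb

theorem head?_eq_of_prefix {α : Type} {b a : List α} (hb : b ≠ []) (hs : b <+: a) :
    a.head? = b.head? := by
  obtain ⟨t, rfl⟩ := hs; exact List.head?_append_of_ne_nil _ hb

theorem prefix_antisymm {α : Type} {a b : List α} (h1 : a <+: b) (h2 : b <+: a) : a = b :=
  h1.eq_of_length (le_antisymm h1.length_le h2.length_le)

theorem suffix_antisymm {α : Type} {a b : List α} (h1 : a <:+ b) (h2 : b <:+ a) : a = b :=
  h1.eq_of_length (le_antisymm h1.length_le h2.length_le)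

variable {V E : Type} {M : MonomialData V E}

/-! ### Paths, zero, alive -/

theorem path_infix {l m : List E} (h : M.toQuiverData.IsPath l) (h2 : m <:+: l) :
    M.toQuiverData.IsPath m := by
  obtain ⟨s, t, rfl⟩ := h2
  unfold QuiverData.IsPath at *
  rw [List.append_assoc] at h
  exact ((List.isChain_append.mp (List.isChain_append.mp h).2.1)).1

theorem zero_mono {l l' : List E} (h : l <:+: l') (hz : M.IsZero l) : M.IsZero l' := by
  obtain ⟨f, hf, hi⟩ := hz; exact ⟨f, hf, hi.trans h⟩

theorem nonzero_infix {l m : List E} (h : M.Nonzero l) (h2 : m <:+: l) : M.Nonzero m :=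
  ⟨path_infix h.1 h2, fun hz => h.2 (zero_mono h2 hz)⟩

theorem zero_F {f : List E} (hf : f ∈ M.F) : M.IsZero f := ⟨f, hf, List.infix_refl f⟩

theorem F_ne_nil {f : List E} (hf : f ∈ M.F) : f ≠ [] := by
  have := M.F_len f hf
  intro h; rw [h] at this; simp at this

theorem eq_of_zero_infix_F {f g : List E} (hf : f ∈ M.F) (hg : g <:+: f) (hz : M.IsZero g) :
    g = f := M.F_min f hf g hg hz

theorem comp_congr_left {a b c : List E} (hb : b ≠ []) (hs : b <:+ a) :
    M.toQuiverData.Composable a c ↔ M.toQuiverData.Composable b c := by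
  unfold QuiverData.Composable
  rw [getLast?_eq_of_suffix hb hs]

theorem comp_congr_right {a b c : List E} (hb : b ≠ []) (hs : b <+: c) :
    M.toQuiverData.Composable a c ↔ M.toQuiverData.Composable a b := by
  unfold QuiverData.Composable
  rw [head?_eq_of_prefix hb hs]

theorem path_append {a b : List E} :
    M.toQuiverData.IsPath (a ++ b) ↔
      M.toQuiverData.IsPath a ∧ M.toQuiverData.IsPath b ∧ M.toQuiverData.Composable a b := by
  unfold QuiverData.IsPath QuiverData.Composable
  exact List.isChain_append

/-! ### Perfect pair API -/

section PP

variable {p q : List E}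

theorem pp_ne_p (h : M.PerfectPair p q) : p ≠ [] := h.1
theorem pp_ne_q (h : M.PerfectPair p q) : q ≠ [] := h.2.1
theorem pp_nz_p (h : M.PerfectPair p q) : M.Nonzero p := h.2.2.1
theorem pp_nz_q (h : M.PerfectPair p q) : M.Nonzero q := h.2.2.2.1
theorem pp_comp (h : M.PerfectPair p q) : M.toQuiverData.Composable p q := h.2.2.2.2.1
theorem pp_zero (h : M.PerfectPair p q) : M.IsZero (p ++ q) := h.2.2.2.2.2.1
theorem pp_min_q (h : M.PerfectPair p q) : ∀ q', q' ≠ [] → M.Nonzero q' → M.toQuiverData.Composable p q' →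
    M.IsZero (p ++ q') → q <+: q' := h.2.2.2.2.2.2.1
theorem pp_min_p (h : M.PerfectPair p q) : ∀ p', p' ≠ [] → M.Nonzero p' → M.toQuiverData.Composable p' q →
    M.IsZero (p' ++ q) → p <:+ p' := h.2.2.2.2.2.2.2

theorem pp_path (h : M.PerfectPair p q) : M.toQuiverData.IsPath (p ++ q) :=
  path_append.mpr ⟨(pp_nz_p h).1, (pp_nz_q h).1, pp_comp h⟩

theorem pp_mem_F (h : M.PerfectPair p q) : p ++ q ∈ M.F := by
  obtain ⟨f, hf, hinf⟩ := pp_zero h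
  rcases infix_split hinf with hc | hc | ⟨u, v, rfl, hu, hv, hus, hvp⟩
  · exact absurd (zero_mono hc (zero_F hf)) (pp_nz_p h).2
  · exact absurd (zero_mono hc (zero_F hf)) (pp_nz_q h).2
  · have hunz : M.Nonzero u := nonzero_infix (pp_nz_p h) hus.isInfix
    have hucomp : M.toQuiverData.Composable u q := (comp_congr_left hu hus).mp (pp_comp h)
    have huq : M.IsZero (u ++ q) := by
      refine zero_mono ?_ (zero_F hf)
      obtain ⟨t, rfl⟩ := hvp
      exact ⟨[], t, by simp [List.append_assoc]⟩
    have hpu : p <:+ u := pp_min_p h u hu hunz hucomp huq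
    have hup : u = p := suffix_antisymm hus hpu
    have hvnz : M.Nonzero v := nonzero_infix (pp_nz_q h) hvp.isInfix
    have hvcomp : M.toQuiverData.Composable p v := (comp_congr_right hv hvp).mp (pp_comp h)
    have hpv : M.IsZero (p ++ v) := by
      rw [← hup]; exact ⟨u ++ v, hf, List.infix_refl _⟩
    have hqv : q <+: v := pp_min_q h v hv hvnz hvcomp hpv
    have hvq : v = q := prefix_antisymm hvp hqv
    rw [← hvq, ← hup]
    exact hf

theorem pp_proper_alive {g : List E} (h : M.PerfectPair p q) (hg : g <:+: p ++ q) (hne : g ≠ p ++ q) : M.Nonzero g :=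
  ⟨path_infix (pp_path h) hg, fun hz => hne (eq_of_zero_infix_F (pp_mem_F h) hg hz)⟩

end PP

/-! ### Chains -/

structure Chain (M : MonomialData V E) where
  s : ℕ → List E
  n : ℕ
  npos : 0 < n
  per : ∀ i, s (i + n) = s i
  pair : ∀ i, M.PerfectPair (s i) (s (i + 1))

namespace Chain

variable (c : Chain M)

theorem per_mul (i k : ℕ) : c.s (i + c.n * k) = c.s i := by
  induction k with
  | zero => simp
  | succ k ih =>
      have : i + c.n * (k + 1) = (i + c.n * k) + c.n := by ring
      rw [this, c.per, ih]

theorem per_dvd {d : ℕ} (h : c.n ∣ d) (i : ℕ) : c.s (i + d) = c.s i := by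
  obtain ⟨k, rfl⟩ := h
  exact c.per_mul i k

theorem nonzero (i : ℕ) : M.Nonzero (c.s i) := pp_nz_p (c.pair i)

theorem ne_nil (i : ℕ) : c.s i ≠ [] := pp_ne_p (c.pair i)

theorem tile_mem (i : ℕ) : c.s i ++ c.s (i + 1) ∈ M.F := pp_mem_F (c.pair i)

theorem tile_zero (i : ℕ) : M.IsZero (c.s i ++ c.s (i + 1)) := zero_F (c.tile_mem i)

theorem tile_alive {g : List E} (i : ℕ) (hg : g <:+: c.s i ++ c.s (i + 1))
    (hne : g ≠ c.s i ++ c.s (i + 1)) : M.Nonzero g := pp_proper_alive (c.pair i) hg hne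

/-- shift a chain -/
def shift (k : ℕ) : Chain M where
  s := fun i => c.s (k + i)
  n := c.n
  npos := c.npos
  per := fun i => by
    show c.s (k + (i + c.n)) = c.s (k + i)
    have : k + (i + c.n) = (k + i) + c.n := by ring
    rw [this, c.per]
  pair := fun i => by
    show M.PerfectPair (c.s (k + i)) (c.s (k + (i + 1)))
    have : k + (i + 1) = (k + i) + 1 := by ring
    rw [this]; exact c.pair (k + i)

theorem perfect : M.IsPerfect (c.s 0) := ⟨c.n, c.s, c.npos, rfl, c.per, c.pair⟩

end Chain


theorem Chain.pair' (c : Chain M) (i j : ℕ) (hj : j = i + 1) :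
    M.PerfectPair (c.s i) (c.s j) := by subst hj; exact c.pair i

theorem Chain.tile_zero' (c : Chain M) (i j : ℕ) (hj : j = i + 1) :
    M.IsZero (c.s i ++ c.s j) := by subst hj; exact c.tile_zero i

theorem Chain.tile_mem' (c : Chain M) (i j : ℕ) (hj : j = i + 1) :
    c.s i ++ c.s j ∈ M.F := by subst hj; exact c.tile_mem i

theorem Chain.tile_alive' (c : Chain M) {g : List E} (i j : ℕ) (hj : j = i + 1)
    (hg : g <:+: c.s i ++ c.s j) (hne : g ≠ c.s i ++ c.s j) : M.Nonzero g := by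
  subst hj; exact c.tile_alive i hg hne

def chainOf {p : List E} (h : M.IsPerfect p) : ∃ c : Chain M, c.s 0 = p := by
  obtain ⟨n, s, hn, h0, hper, hpair⟩ := h
  exact ⟨⟨s, n, hn, hper, hpair⟩, h0⟩


/-! ### Strict interleaving development -/

theorem append_ne_nil_left' {a b : List E} (h : a ≠ []) : a ++ b ≠ [] := fun h0 =>
  h (List.append_eq_nil_iff.mp h0).1

theorem len_pos {l : List E} (h : l ≠ []) : 0 < l.length := List.length_pos_iff.mpr h

section Strict

variable (P Q : Chain M)

/-- The invariant for strictly interleaved chains. -/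
def Good (k : ℕ) (t : List E × List E × List E) : Prop :=
  t.1 ≠ [] ∧ t.2.1 ≠ [] ∧ t.2.2 ≠ [] ∧
    P.s k = t.1 ++ t.2.1 ∧ Q.s k = t.2.1 ++ t.2.2 ∧ M.Nonzero (P.s k ++ t.2.2)

theorem good_step {k : ℕ} {t : List E × List E × List E} (h : Good P Q k t) :
    ∃ t', Good P Q (k + 1) t' ∧ t'.1 = t.2.2 := by
  obtain ⟨α, β, γ⟩ := t
  obtain ⟨ha, hb, hc, hP, hQ, hU⟩ := h
  dsimp only at ha hb hc hP hQ hU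
  have hQpath : M.toQuiverData.IsPath (Q.s k) := (Q.nonzero k).1
  have hcompβγ : M.toQuiverData.Composable β γ := by
    rw [hQ] at hQpath; exact (path_append.mp hQpath).2.2
  have hγsuf : γ <:+ Q.s k := ⟨β, hQ.symm⟩
  have hβsufP : β <:+ P.s k := ⟨α, hP.symm⟩
  have hu0inf : γ ++ Q.s (k + 1) <:+: Q.s k ++ Q.s (k + 1) := by
    refine ⟨β, [], ?_⟩
    rw [hQ]; simp [List.append_assoc]
  have hu0ne : γ ++ Q.s (k + 1) ≠ Q.s k ++ Q.s (k + 1) := by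
    intro he
    have := congrArg List.length he
    rw [hQ] at this
    simp only [List.length_append] at this
    have := len_pos hb
    omega
  have hu0 : M.Nonzero (γ ++ Q.s (k + 1)) := Q.tile_alive k hu0inf hu0ne
  have hcompP : M.toQuiverData.Composable (P.s k) (γ ++ Q.s (k + 1)) := by
    rw [comp_congr_right hc (List.prefix_append γ (Q.s (k + 1)))]
    rw [comp_congr_left hb hβsufP]
    exact hcompβγ
  have hdead : M.IsZero (P.s k ++ (γ ++ Q.s (k + 1))) := by
    refine zero_mono ⟨α, [], ?_⟩ (Q.tile_zero k)
    rw [hP, hQ]; simp [List.append_assoc]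
  have h1 : P.s (k + 1) <+: γ ++ Q.s (k + 1) :=
    pp_min_q (P.pair k) _ (append_ne_nil_left' hc) hu0 hcompP hdead
  have h2 : ¬ (P.s (k + 1)).length ≤ γ.length := by
    intro hle
    have hpγ : P.s (k + 1) <+: γ :=
      List.prefix_of_prefix_length_le h1 (List.prefix_append γ _) hle
    obtain ⟨w, hw⟩ := hpγ
    apply hU.2
    refine zero_mono ⟨[], w, ?_⟩ (P.tile_zero k)
    rw [← hw]; simp [List.append_assoc]
  push_neg at h2
  have hγpre : γ <+: P.s (k + 1) :=
    List.prefix_of_prefix_length_le (List.prefix_append γ _) h1 (le_of_lt h2)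
  obtain ⟨δ, hδ⟩ := hγpre
  have hδpre : δ <+: Q.s (k + 1) := by
    refine prefix_append_cancel (l := γ) ?_
    rw [hδ]; exact h1
  have hδne : δ ≠ [] := by
    intro h0
    rw [h0, List.append_nil] at hδ
    apply hU.2
    rw [hδ]
    exact P.tile_zero k
  have hδproper : δ ≠ Q.s (k + 1) := by
    intro he
    have heq : P.s k ++ P.s (k + 1) = α ++ (Q.s k ++ Q.s (k + 1)) := by
      rw [hP, hQ, ← hδ, he]; simp [List.append_assoc]
    have hQQ : Q.s k ++ Q.s (k + 1) = P.s k ++ P.s (k + 1) :=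
      eq_of_zero_infix_F (P.tile_mem k) (by rw [heq]; exact ⟨α, [], by simp⟩) (Q.tile_zero k)
    have hlen := congrArg List.length hQQ
    rw [heq] at hlen
    simp only [List.length_append] at hlen
    have := len_pos ha
    omega
  obtain ⟨ε, hε⟩ := hδpre
  have hεne : ε ≠ [] := fun h0 => hδproper (by rw [← hε, h0, List.append_nil])
  refine ⟨(γ, δ, ε), ⟨hc, hδne, hεne, hδ.symm, hε.symm, ?_⟩, rfl⟩
  have : P.s (k + 1) ++ ε = γ ++ Q.s (k + 1) := by
    rw [← hδ, ← hε]; simp [List.append_assoc]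
  rw [this]
  exact hu0

/-- Split data for two strictly interleaved chains. -/
structure Splits (P Q : Chain M) where
  A : ℕ → List E
  B : ℕ → List E
  C : ℕ → List E
  hA : ∀ k, A k ≠ []
  hB : ∀ k, B k ≠ []
  hC : ∀ k, C k ≠ []
  hP : ∀ k, P.s k = A k ++ B k
  hQ : ∀ k, Q.s k = B k ++ C k
  hU : ∀ k, M.Nonzero (P.s k ++ C k)
  link : ∀ k, A (k + 1) = C k

variable {P Q}

noncomputable def seqGood (t0 : List E × List E × List E) (h0 : Good P Q 0 t0) :
    (k : ℕ) → {t // Good P Q k t}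
  | 0 => ⟨t0, h0⟩
  | (k + 1) =>
      ⟨(good_step P Q (seqGood t0 h0 k).2).choose,
        ((good_step P Q (seqGood t0 h0 k).2).choose_spec).1⟩

theorem seqGood_link (t0 : List E × List E × List E) (h0 : Good P Q 0 t0) (k : ℕ) :
    ((seqGood t0 h0 (k + 1)).1).1 = ((seqGood t0 h0 k).1).2.2 :=
  ((good_step P Q (seqGood t0 h0 k).2).choose_spec).2

theorem splits_of_good (t0 : List E × List E × List E) (h0 : Good P Q 0 t0) :
    ∃ S : Splits P Q, S.A 0 = t0.1 ∧ S.B 0 = t0.2.1 := by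
  refine ⟨⟨fun k => ((seqGood t0 h0 k).1).1, fun k => ((seqGood t0 h0 k).1).2.1,
    fun k => ((seqGood t0 h0 k).1).2.2,
    fun k => ((seqGood t0 h0 k).2).1, fun k => ((seqGood t0 h0 k).2).2.1,
    fun k => ((seqGood t0 h0 k).2).2.2.1,
    fun k => ((seqGood t0 h0 k).2).2.2.2.1, fun k => ((seqGood t0 h0 k).2).2.2.2.2.1,
    fun k => ((seqGood t0 h0 k).2).2.2.2.2.2, fun k => seqGood_link t0 h0 k⟩, rfl, rfl⟩

end Strict


/-! ### Drift and periodicity of splits -/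

section Drift

variable {P Q : Chain M}

theorem key_len (S : Splits P Q) (k : ℕ) :
    (S.B (k + 1)).length + (Q.s k).length = (S.B k).length + (P.s (k + 1)).length := by
  have h1 := congrArg List.length (S.hQ k)
  have h2 := congrArg List.length (S.hP (k + 1))
  rw [S.link k] at h2
  simp only [List.length_append] at h1 h2
  omega

theorem telescope (S : Splits P Q) (k : ℕ) : ∀ j : ℕ,
    (S.B (k + j)).length + (∑ i ∈ Finset.range j, (Q.s (k + i)).length) =
      (S.B k).length + (∑ i ∈ Finset.range j, (P.s (k + 1 + i)).length) := by
  intro j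
  induction j with
  | zero => simp
  | succ j ih =>
      have hk := key_len S (k + j)
      rw [Finset.sum_range_succ, Finset.sum_range_succ]
      have e1 : k + (j + 1) = (k + j) + 1 := by omega
      have e2 : k + 1 + j = (k + j) + 1 := by omega
      rw [e1, e2]
      omega

theorem sum_shift (f : ℕ → ℕ) (N : ℕ) (hf : ∀ k, f (k + N) = f k) :
    ∀ k, ∑ i ∈ Finset.range N, f (k + i) = ∑ i ∈ Finset.range N, f i := by
  intro k
  induction k with
  | zero => simp
  | succ k ih =>
      rw [← ih]
      have h1 := Finset.sum_range_succ (fun i => f (k + i)) N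
      have h2 := Finset.sum_range_succ' (fun i => f (k + i)) N
      have h3 : ∀ i ∈ Finset.range N, f (k + 1 + i) = f (k + (i + 1)) := by
        intro i _; congr 1; omega
      rw [Finset.sum_congr rfl h3]
      simp only [Nat.add_zero] at h1 h2
      have hfn := hf k
      omega

theorem b_eq (S : Splits P Q) : ∀ k, (S.B (k + P.n * Q.n)).length = (S.B k).length := by
  set N := P.n * Q.n with hN
  have hPdvd : P.n ∣ N := ⟨Q.n, rfl⟩
  have hQdvd : Q.n ∣ N := ⟨P.n, mul_comm _ _⟩
  have hfP : ∀ k, (P.s (k + N)).length = (P.s k).length := fun k => by rw [P.per_dvd hPdvd]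
  have hfQ : ∀ k, (Q.s (k + N)).length = (Q.s k).length := fun k => by rw [Q.per_dvd hQdvd]
  have hSQ := sum_shift (fun i => (Q.s i).length) N hfQ
  have hSP := sum_shift (fun i => (P.s i).length) N hfP
  have hEq : ∀ k, (S.B (k + N)).length + (∑ i ∈ Finset.range N, (Q.s i).length) =
      (S.B k).length + (∑ i ∈ Finset.range N, (P.s i).length) := by
    intro k
    have ht := telescope S k N
    rw [hSQ k, hSP (k + 1)] at ht
    exact ht
  set SQ := ∑ i ∈ Finset.range N, (Q.s i).length with hSQdef
  set SP := ∑ i ∈ Finset.range N, (P.s i).length with hSPdef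
  have hBpos : ∀ k, 0 < (S.B k).length := fun k => len_pos (S.hB k)
  have hBlt : ∀ k, (S.B k).length < (Q.s k).length := by
    intro k
    have h := congrArg List.length (S.hQ k)
    simp only [List.length_append] at h
    have := len_pos (S.hC k)
    omega
  rcases lt_trichotomy SP SQ with hlt | heq | hgt
  · exfalso
    have hdec : ∀ k, (S.B (k + N)).length < (S.B k).length := fun k => by
      have := hEq k; omega
    have hiter : ∀ j, (S.B (j * N)).length + j ≤ (S.B 0).length := by
      intro j; induction j with
      | zero => simp
      | succ j ih =>
          have := hdec (j * N)
          have e : (j + 1) * N = j * N + N := by ring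
          rw [e]; omega
    have h1 := hiter (S.B 0).length
    have h2 := hBpos ((S.B 0).length * N)
    omega
  · intro k; have := hEq k; omega
  · exfalso
    have hinc : ∀ k, (S.B k).length < (S.B (k + N)).length := fun k => by
      have := hEq k; omega
    have hiter : ∀ j, (S.B 0).length + j ≤ (S.B (j * N)).length := by
      intro j; induction j with
      | zero => simp
      | succ j ih =>
          have := hinc (j * N)
          have e : (j + 1) * N = j * N + N := by ring
          rw [e]; omega
    have hQ0 : (Q.s ((Q.s 0).length * N)).length = (Q.s 0).length := by
      have h : (Q.s 0).length * N = 0 + Q.n * (P.n * (Q.s 0).length) := by rw [hN]; ring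
      rw [h, Q.per_mul]
    have h1 := hiter (Q.s 0).length
    have h2 := hBlt ((Q.s 0).length * N)
    omega

theorem splits_per (S : Splits P Q) :
    (∀ k, S.A (k + P.n * Q.n) = S.A k) ∧ (∀ k, S.B (k + P.n * Q.n) = S.B k) ∧
      (∀ k, S.C (k + P.n * Q.n) = S.C k) := by
  have hb := b_eq S
  have hPs : ∀ k, P.s (k + P.n * Q.n) = P.s k := fun k => P.per_dvd ⟨Q.n, rfl⟩ k
  have hQs : ∀ k, Q.s (k + P.n * Q.n) = Q.s k := fun k => Q.per_dvd ⟨P.n, mul_comm _ _⟩ k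
  have hAB : ∀ k, S.A (k + P.n * Q.n) = S.A k ∧ S.B (k + P.n * Q.n) = S.B k := by
    intro k
    have h1 : S.A (k + P.n * Q.n) ++ S.B (k + P.n * Q.n) = S.A k ++ S.B k := by
      rw [← S.hP, ← S.hP, hPs]
    have hlenB := hb k
    have hlenA : (S.A (k + P.n * Q.n)).length = (S.A k).length := by
      have := congrArg List.length h1
      simp only [List.length_append] at this
      omega
    exact List.append_inj h1 hlenA
  refine ⟨fun k => (hAB k).1, fun k => (hAB k).2, fun k => ?_⟩
  have h2 : S.B (k + P.n * Q.n) ++ S.C (k + P.n * Q.n) = S.B k ++ S.C k := by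
    rw [← S.hQ, ← S.hQ, hQs]
  rw [(hAB k).2] at h2
  exact List.append_cancel_left h2

end Drift


/-! ### The merged chain: perfect pairs (strict case) -/

section MergedStrict

variable {P Q : Chain M} (S : Splits P Q)

theorem B_alive (k : ℕ) : M.Nonzero (S.B (k + 1) ++ P.s (k + 2)) := by
  have hrepr : S.B (k + 1) ++ P.s (k + 2) = Q.s (k + 1) ++ S.B (k + 2) := by
    rw [S.hP (k + 2), S.link (k + 1), S.hQ (k + 1)]
    simp [List.append_assoc]
  rw [hrepr]
  refine Q.tile_alive' (k + 1) (k + 2) rfl ⟨[], S.C (k + 2), ?_⟩ ?_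
  · rw [S.hQ (k + 2)]; simp [List.append_assoc]
  · intro he
    have hl := congrArg List.length he
    rw [S.hQ (k + 2)] at hl
    simp only [List.length_append] at hl
    have := len_pos (S.hC (k + 2))
    omega

theorem pairA (k : ℕ) : M.PerfectPair (S.A (k + 1)) (S.B (k + 1) ++ P.s (k + 2)) := by
  refine ⟨S.hA (k + 1), append_ne_nil_left' (S.hB (k + 1)), ?_, B_alive S k, ?_, ?_, ?_, ?_⟩
  · have hpre : S.A (k + 1) <+: P.s (k + 1) := ⟨S.B (k + 1), (S.hP (k + 1)).symm⟩
    exact nonzero_infix (P.nonzero (k + 1)) hpre.isInfix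
  · -- Composable
    rw [comp_congr_right (S.hB (k + 1)) (List.prefix_append _ _)]
    have hp := (P.nonzero (k + 1)).1
    rw [S.hP (k + 1)] at hp
    exact (path_append.mp hp).2.2
  · -- IsZero (A (k+1) ++ (B (k+1) ++ P (k+2)))
    have he : S.A (k + 1) ++ (S.B (k + 1) ++ P.s (k + 2)) = P.s (k + 1) ++ P.s (k + 2) := by
      rw [S.hP (k + 1)]; simp [List.append_assoc]
    rw [he]; exact P.tile_zero' (k + 1) (k + 2) rfl
  · -- minimality on the right
    intro u hu hnzu hcomp hdead
    have hsufA : S.A (k + 1) <:+ Q.s k := ⟨S.B k, by rw [S.hQ k, ← S.link k]⟩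
    have hq1 : M.IsZero (Q.s k ++ u) := by
      obtain ⟨w, hw⟩ := hsufA
      refine zero_mono ⟨w, [], ?_⟩ hdead
      rw [← hw]; simp [List.append_assoc]
    have hc2 : M.toQuiverData.Composable (Q.s k) u :=
      (comp_congr_left (S.hA (k + 1)) hsufA).mpr hcomp
    have hQk : Q.s (k + 1) <+: u := pp_min_q (Q.pair k) u hu hnzu hc2 hq1
    obtain ⟨u₂, hu₂⟩ := hQk
    have hu₂ne : u₂ ≠ [] := by
      intro h0
      rw [h0, List.append_nil] at hu₂
      apply (S.hU (k + 1)).2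
      have he : P.s (k + 1) ++ S.C (k + 1) = S.A (k + 1) ++ Q.s (k + 1) := by
        rw [S.hP (k + 1), S.hQ (k + 1)]; simp [List.append_assoc]
      rw [he, hu₂]
      exact hdead
    have hsufu : S.C (k + 1) ++ u₂ <:+ u :=
      ⟨S.B (k + 1), by rw [← hu₂, S.hQ (k + 1)]; simp [List.append_assoc]⟩
    have halive : M.Nonzero (S.C (k + 1) ++ u₂) := nonzero_infix hnzu hsufu.isInfix
    have hc3 : M.toQuiverData.Composable (P.s (k + 1)) (S.C (k + 1) ++ u₂) := by
      rw [comp_congr_right (S.hC (k + 1)) (List.prefix_append _ _)]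
      rw [comp_congr_left (S.hB (k + 1))
        (⟨S.A (k + 1), (S.hP (k + 1)).symm⟩ : S.B (k + 1) <:+ P.s (k + 1))]
      have hq := (Q.nonzero (k + 1)).1
      rw [S.hQ (k + 1)] at hq
      exact (path_append.mp hq).2.2
    have hdead2 : M.IsZero (P.s (k + 1) ++ (S.C (k + 1) ++ u₂)) := by
      have he : P.s (k + 1) ++ (S.C (k + 1) ++ u₂) = S.A (k + 1) ++ u := by
        rw [← hu₂, S.hP (k + 1), S.hQ (k + 1)]; simp [List.append_assoc]
      rw [he]; exact hdead
    have h7 := pp_min_q (P.pair' (k + 1) (k + 2) rfl) _ (append_ne_nil_left' (S.hC (k + 1))) halive hc3 hdead2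
    rw [S.hP (k + 2), S.link (k + 1)] at h7
    have hBu : S.B (k + 2) <+: u₂ := prefix_append_cancel h7
    obtain ⟨w, hw⟩ := hBu
    refine ⟨w, ?_⟩
    rw [← hu₂, S.hP (k + 2), S.link (k + 1), S.hQ (k + 1), ← hw]
    simp [List.append_assoc]
  · -- minimality on the left
    intro v hv hnzv hcomp hdead
    by_cases hz : M.IsZero (v ++ S.B (k + 1))
    · have hpreB : S.B (k + 1) <+: Q.s (k + 1) := ⟨S.C (k + 1), (S.hQ (k + 1)).symm⟩
      have hc2 : M.toQuiverData.Composable v (Q.s (k + 1)) := by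
        rw [comp_congr_right (S.hB (k + 1)) hpreB]
        rw [comp_congr_right (S.hB (k + 1)) (List.prefix_append _ _)] at hcomp
        exact hcomp
      have hdead' : M.IsZero (v ++ Q.s (k + 1)) := by
        refine zero_mono ⟨[], S.C (k + 1), ?_⟩ hz
        rw [S.hQ (k + 1)]; simp [List.append_assoc]
      have h8 := pp_min_p (Q.pair k) v hv hnzv hc2 hdead'
      have hsufA : S.A (k + 1) <:+ Q.s k := ⟨S.B k, by rw [S.hQ k, ← S.link k]⟩
      exact hsufA.trans h8
    · have hpreBQ : S.B (k + 1) <+: Q.s (k + 1) := ⟨S.C (k + 1), (S.hQ (k + 1)).symm⟩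
      have hBpath : M.toQuiverData.IsPath (S.B (k + 1)) :=
        path_infix (Q.nonzero (k + 1)).1 hpreBQ.isInfix
      have hcvB : M.toQuiverData.Composable v (S.B (k + 1)) := by
        rw [comp_congr_right (S.hB (k + 1)) (List.prefix_append _ _)] at hcomp
        exact hcomp
      have hnz2 : M.Nonzero (v ++ S.B (k + 1)) :=
        ⟨path_append.mpr ⟨hnzv.1, hBpath, hcvB⟩, hz⟩
      have hsufB : S.B (k + 1) <:+ P.s (k + 1) := ⟨S.A (k + 1), (S.hP (k + 1)).symm⟩
      have hc3 : M.toQuiverData.Composable (v ++ S.B (k + 1)) (P.s (k + 2)) := by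
        rw [comp_congr_left (S.hB (k + 1)) (List.suffix_append v _)]
        rw [← comp_congr_left (S.hB (k + 1)) hsufB]
        exact pp_comp (P.pair' (k + 1) (k + 2) rfl)
      have hdead2 : M.IsZero ((v ++ S.B (k + 1)) ++ P.s (k + 2)) := by
        rw [List.append_assoc]; exact hdead
      have h8 := pp_min_p (P.pair' (k + 1) (k + 2) rfl) _ (append_ne_nil_left' hv) hnz2 hc3 hdead2
      rw [S.hP (k + 1)] at h8
      exact suffix_append_cancel h8

theorem pairB (k : ℕ) : M.PerfectPair (S.B (k + 1) ++ P.s (k + 2)) (S.A (k + 3)) := by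
  refine ⟨append_ne_nil_left' (S.hB (k + 1)), S.hA (k + 3), B_alive S k, ?_, ?_, ?_, ?_, ?_⟩
  · have hpre : S.A (k + 3) <+: P.s (k + 3) := ⟨S.B (k + 3), (S.hP (k + 3)).symm⟩
    exact nonzero_infix (P.nonzero (k + 3)) hpre.isInfix
  · -- Composable
    rw [comp_congr_left (P.ne_nil (k + 2)) (List.suffix_append _ _)]
    rw [S.link (k + 2)]
    rw [comp_congr_left (S.hB (k + 2))
      (⟨S.A (k + 2), (S.hP (k + 2)).symm⟩ : S.B (k + 2) <:+ P.s (k + 2))]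
    have hq := (Q.nonzero (k + 2)).1
    rw [S.hQ (k + 2)] at hq
    exact (path_append.mp hq).2.2
  · -- IsZero
    have he : (S.B (k + 1) ++ P.s (k + 2)) ++ S.A (k + 3) = Q.s (k + 1) ++ Q.s (k + 2) := by
      rw [S.hP (k + 2), S.link (k + 1), S.link (k + 2), S.hQ (k + 1), S.hQ (k + 2)]
      simp [List.append_assoc]
    rw [he]; exact Q.tile_zero' (k + 1) (k + 2) rfl
  · -- minimality on the right
    intro u hu hnzu hcomp hdead
    rw [comp_congr_left (P.ne_nil (k + 2)) (List.suffix_append (S.B (k + 1)) _)] at hcomp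
    by_cases hz : M.IsZero (S.B (k + 2) ++ u)
    · have hdP : M.IsZero (P.s (k + 2) ++ u) := by
        refine zero_mono ⟨S.A (k + 2), [], ?_⟩ hz
        rw [S.hP (k + 2)]; simp [List.append_assoc]
      have h7 := pp_min_q (P.pair' (k + 2) (k + 3) rfl) u hu hnzu hcomp hdP
      have hpre : S.A (k + 3) <+: P.s (k + 3) := ⟨S.B (k + 3), (S.hP (k + 3)).symm⟩
      exact hpre.trans h7
    · have hsufBP : S.B (k + 2) <:+ P.s (k + 2) := ⟨S.A (k + 2), (S.hP (k + 2)).symm⟩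
      have hBpath : M.toQuiverData.IsPath (S.B (k + 2)) :=
        path_infix (P.nonzero (k + 2)).1 hsufBP.isInfix
      have hcBu : M.toQuiverData.Composable (S.B (k + 2)) u := by
        rw [← comp_congr_left (S.hB (k + 2))
          (⟨S.A (k + 2), (S.hP (k + 2)).symm⟩ : S.B (k + 2) <:+ P.s (k + 2))]
        exact hcomp
      have hnzBu : M.Nonzero (S.B (k + 2) ++ u) :=
        ⟨path_append.mpr ⟨hBpath, hnzu.1, hcBu⟩, hz⟩
      have hcQ : M.toQuiverData.Composable (Q.s (k + 1)) (S.B (k + 2) ++ u) := by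
        rw [comp_congr_right (S.hB (k + 2)) (List.prefix_append _ _)]
        rw [← comp_congr_right (S.hB (k + 2))
          (⟨S.C (k + 2), (S.hQ (k + 2)).symm⟩ : S.B (k + 2) <+: Q.s (k + 2))]
        exact pp_comp (Q.pair' (k + 1) (k + 2) rfl)
      have hdQ : M.IsZero (Q.s (k + 1) ++ (S.B (k + 2) ++ u)) := by
        have he : Q.s (k + 1) ++ (S.B (k + 2) ++ u) = (S.B (k + 1) ++ P.s (k + 2)) ++ u := by
          rw [S.hQ (k + 1), S.hP (k + 2), S.link (k + 1)]
          simp [List.append_assoc]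
        rw [he]; exact hdead
      have h7 := pp_min_q (Q.pair' (k + 1) (k + 2) rfl) _ (append_ne_nil_left' (S.hB (k + 2))) hnzBu hcQ hdQ
      rw [S.hQ (k + 2)] at h7
      have hCu : S.C (k + 2) <+: u := prefix_append_cancel h7
      rw [S.link (k + 2)]
      exact hCu
  · -- minimality on the left
    intro v hv hnzv hcomp hdead
    have hd1 : M.IsZero (v ++ P.s (k + 3)) := by
      refine zero_mono ⟨[], S.B (k + 3), ?_⟩ hdead
      rw [S.hP (k + 3)]; simp [List.append_assoc]
    have hc1 : M.toQuiverData.Composable v (P.s (k + 3)) := by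
      rw [comp_congr_right (S.hA (k + 3)) (⟨S.B (k + 3), (S.hP (k + 3)).symm⟩ :
        S.A (k + 3) <+: P.s (k + 3))]
      exact hcomp
    have h8 := pp_min_p (P.pair' (k + 2) (k + 3) rfl) v hv hnzv hc1 hd1
    obtain ⟨v₃, hv₃⟩ := h8
    have hv₃ne : v₃ ≠ [] := by
      intro h0
      rw [h0, List.nil_append] at hv₃
      have halive : M.Nonzero (S.C (k + 1) ++ Q.s (k + 2)) := by
        refine Q.tile_alive' (k + 1) (k + 2) rfl ⟨S.B (k + 1), [], by rw [S.hQ (k + 1)]; simp [List.append_assoc]⟩ ?_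
        intro he
        have hl := congrArg List.length he
        rw [S.hQ (k + 1)] at hl
        simp only [List.length_append] at hl
        have := len_pos (S.hB (k + 1))
        omega
      have he : S.C (k + 1) ++ Q.s (k + 2) = v ++ S.A (k + 3) := by
        rw [← hv₃, S.hP (k + 2), S.link (k + 1), S.link (k + 2), S.hQ (k + 2)]
        simp [List.append_assoc]
      exact halive.2 (he ▸ hdead)
    by_cases hz2 : M.IsZero (v₃ ++ S.A (k + 2))
    · exfalso
      apply hnzv.2
      refine zero_mono ⟨[], S.B (k + 2), ?_⟩ hz2
      rw [← hv₃, S.hP (k + 2)]; simp [List.append_assoc]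
    · have hpreAP : S.A (k + 2) <+: P.s (k + 2) := ⟨S.B (k + 2), (S.hP (k + 2)).symm⟩
      have hApath : M.toQuiverData.IsPath (S.A (k + 2)) :=
        path_infix (P.nonzero (k + 2)).1 hpreAP.isInfix
      have hvpath : M.toQuiverData.IsPath (v₃ ++ P.s (k + 2)) := by rw [hv₃]; exact hnzv.1
      have hcva : M.toQuiverData.Composable v₃ (S.A (k + 2)) := by
        have h := (path_append.mp hvpath).2.2
        rw [comp_congr_right (S.hA (k + 2))
          (⟨S.B (k + 2), (S.hP (k + 2)).symm⟩ : S.A (k + 2) <+: P.s (k + 2))] at h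
        exact h
      have hnzva : M.Nonzero (v₃ ++ S.A (k + 2)) :=
        ⟨path_append.mpr ⟨(path_append.mp hvpath).1, hApath, hcva⟩, hz2⟩
      have hcQ2 : M.toQuiverData.Composable (v₃ ++ S.A (k + 2)) (Q.s (k + 2)) := by
        rw [comp_congr_left (S.hA (k + 2)) (List.suffix_append v₃ _)]
        rw [comp_congr_right (S.hB (k + 2)) (⟨S.C (k + 2), (S.hQ (k + 2)).symm⟩ :
          S.B (k + 2) <+: Q.s (k + 2))]
        have hp := (P.nonzero (k + 2)).1
        rw [S.hP (k + 2)] at hp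
        exact (path_append.mp hp).2.2
      have hdQ2 : M.IsZero ((v₃ ++ S.A (k + 2)) ++ Q.s (k + 2)) := by
        have he : (v₃ ++ S.A (k + 2)) ++ Q.s (k + 2) = v ++ S.A (k + 3) := by
          rw [← hv₃, S.hP (k + 2), S.link (k + 2), S.hQ (k + 2)]
          simp [List.append_assoc]
        rw [he]; exact hdead
      have h8b := pp_min_p (Q.pair' (k + 1) (k + 2) rfl) _ (append_ne_nil_left' hv₃ne) hnzva hcQ2 hdQ2
      rw [S.hQ (k + 1), S.link (k + 1)] at h8b
      have hBv₃ : S.B (k + 1) <:+ v₃ := suffix_append_cancel h8b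
      obtain ⟨w, hw⟩ := hBv₃
      refine ⟨w, ?_⟩
      rw [← hv₃, ← hw]
      simp [List.append_assoc]

end MergedStrict


/-! ### Assembling the merged chain (strict case) -/

section StrictMain

variable {P Q : Chain M}

noncomputable def mergedStrict (S : Splits P Q) (K' : ℕ) : ℕ → List E := fun i =>
  if Even i then S.A (K' + 1 + i) else S.B (K' + i) ++ P.s (K' + 1 + i)

theorem mergedStrict_per (S : Splits P Q) (K' i : ℕ) :
    mergedStrict S K' (i + 2 * (P.n * Q.n)) = mergedStrict S K' i := by
  have hEv : Even (i + 2 * (P.n * Q.n)) ↔ Even i := by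
    simp [Nat.even_add]
  unfold mergedStrict
  by_cases h : Even i
  · rw [if_pos h, if_pos (hEv.mpr h)]
    have e2 : K' + 1 + (i + 2 * (P.n * Q.n)) = ((K' + 1 + i) + P.n * Q.n) + P.n * Q.n := by
      ring
    rw [e2, (splits_per S).1, (splits_per S).1]
  · rw [if_neg h, if_neg (fun hc => h (hEv.mp hc))]
    have e2 : K' + (i + 2 * (P.n * Q.n)) = ((K' + i) + P.n * Q.n) + P.n * Q.n := by ring
    have e3 : K' + 1 + (i + 2 * (P.n * Q.n)) = ((K' + 1 + i) + P.n * Q.n) + P.n * Q.n := by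
      ring
    rw [e2, e3, (splits_per S).2.1, (splits_per S).2.1,
      P.per_dvd ⟨Q.n, rfl⟩, P.per_dvd ⟨Q.n, rfl⟩]

theorem mergedStrict_pair (S : Splits P Q) (K' i : ℕ) :
    M.PerfectPair (mergedStrict S K' i) (mergedStrict S K' (i + 1)) := by
  unfold mergedStrict
  rcases Nat.even_or_odd i with he | ho
  · rw [if_pos he, if_neg (by simp [Nat.even_add_one, he])]
    have e1 : K' + (i + 1) = (K' + i) + 1 := by ring
    have e2 : K' + 1 + (i + 1) = (K' + i) + 2 := by ring
    have e3 : K' + 1 + i = (K' + i) + 1 := by ring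
    rw [e1, e2, e3]
    exact pairA S (K' + i)
  · obtain ⟨l, rfl⟩ := ho
    rw [if_neg (by simp [Nat.even_add_one, Nat.even_add]), if_pos (by
      refine (Nat.even_add_one).mpr ?_
      simp [Nat.even_add_one, Nat.even_add])]
    have e1 : K' + (2 * l + 1) = (K' + 2 * l) + 1 := by ring
    have e2 : K' + 1 + (2 * l + 1) = (K' + 2 * l) + 2 := by ring
    have e3 : K' + 1 + (2 * l + 1 + 1) = (K' + 2 * l) + 3 := by ring
    rw [e1, e2, e3]
    exact pairB S (K' + 2 * l)

theorem strict_main {t0 : List E × List E × List E} (h0 : Good P Q 0 t0) {K : ℕ}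
    (hK : 1 ≤ K) :
    ∃ a b, a ≠ [] ∧ b ≠ [] ∧ P.s K = a ++ b ∧ M.IsPerfect a := by
  obtain ⟨S, -, -⟩ := splits_of_good t0 h0
  obtain ⟨K', rfl⟩ : ∃ K', K = K' + 1 := ⟨K - 1, by omega⟩
  refine ⟨S.A (K' + 1), S.B (K' + 1), S.hA _, S.hB _, S.hP _, ?_⟩
  refine ⟨2 * (P.n * Q.n), mergedStrict S K',
    Nat.mul_pos (by norm_num) (Nat.mul_pos P.npos Q.npos), ?_,
    fun i => mergedStrict_per S K' i, fun i => mergedStrict_pair S K' i⟩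
  unfold mergedStrict
  rw [if_pos Even.zero]

end StrictMain


/-! ### Shared regime development -/

section Shared

variable (P Q : Chain M)

/-- Block overhangs for the shared regime. -/
def Alp (a0 : List E) : ℕ → List E := fun r =>
  match r with
  | 0 => a0
  | (r + 1) => (Q.s (2 * r + 1)).drop (P.s (2 * r + 1)).length

/-- The shared-block invariant. -/
def INVr (a0 : List E) (r : ℕ) : Prop :=
  Alp P Q a0 r ≠ [] ∧ P.s (2 * r) = Alp P Q a0 r ++ Q.s (2 * r)

variable {P Q}

theorem sharedStep1 {a0 : List E} {r : ℕ} (h : INVr P Q a0 r) :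
    Q.s (2 * r + 1) = P.s (2 * r + 1) ++ Alp P Q a0 (r + 1) ∧ Alp P Q a0 (r + 1) ≠ [] := by
  obtain ⟨ha, hP⟩ := h
  have hsuf : Q.s (2 * r) <:+ P.s (2 * r) := ⟨Alp P Q a0 r, hP.symm⟩
  have hcomp : M.toQuiverData.Composable (P.s (2 * r)) (Q.s (2 * r + 1)) := by
    rw [comp_congr_left (Q.ne_nil (2 * r)) hsuf]
    exact pp_comp (Q.pair (2 * r))
  have hdead : M.IsZero (P.s (2 * r) ++ Q.s (2 * r + 1)) := by
    refine zero_mono ⟨Alp P Q a0 r, [], ?_⟩ (Q.tile_zero (2 * r))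
    rw [hP]; simp [List.append_assoc]
  have h1 : P.s (2 * r + 1) <+: Q.s (2 * r + 1) :=
    pp_min_q (P.pair (2 * r)) _ (Q.ne_nil _) (Q.nonzero _) hcomp hdead
  have hproper : P.s (2 * r + 1) ≠ Q.s (2 * r + 1) := by
    intro he
    have heq : P.s (2 * r) ++ P.s (2 * r + 1) =
        Alp P Q a0 r ++ (Q.s (2 * r) ++ Q.s (2 * r + 1)) := by
      rw [hP, he]; simp [List.append_assoc]
    have hQQ : Q.s (2 * r) ++ Q.s (2 * r + 1) = P.s (2 * r) ++ P.s (2 * r + 1) :=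
      eq_of_zero_infix_F (P.tile_mem (2 * r)) (by rw [heq]; exact ⟨Alp P Q a0 r, [], by simp⟩)
        (Q.tile_zero (2 * r))
    have hl := congrArg List.length hQQ
    rw [heq] at hl
    simp only [List.length_append] at hl
    have := len_pos ha
    omega
  obtain ⟨w, hw⟩ := h1
  have hwne : w ≠ [] := fun h0 => hproper (by rw [← hw, h0, List.append_nil])
  have hAl : Alp P Q a0 (r + 1) = w := by
    show (Q.s (2 * r + 1)).drop (P.s (2 * r + 1)).length = w
    rw [← hw, List.drop_left]
  rw [hAl]
  exact ⟨hw.symm, hwne⟩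

theorem sharedStep2 {a0 : List E} {r : ℕ} (h : INVr P Q a0 r)
    (h1 : Q.s (2 * r + 1) = P.s (2 * r + 1) ++ Alp P Q a0 (r + 1))
    (hA1 : Alp P Q a0 (r + 1) ≠ []) :
    P.s (2 * r + 2) = Alp P Q a0 (r + 1) ++ Q.s (2 * r + 2) ∨
      ∃ β γ, β ≠ [] ∧ γ ≠ [] ∧ P.s (2 * r + 2) = Alp P Q a0 (r + 1) ++ β ∧
        Q.s (2 * r + 2) = β ++ γ ∧ M.Nonzero (P.s (2 * r + 2) ++ γ) := by
  set a1 := Alp P Q a0 (r + 1) with ha1def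
  have hu0inf : a1 ++ Q.s (2 * r + 2) <:+: Q.s (2 * r + 1) ++ Q.s (2 * r + 2) := by
    refine ⟨P.s (2 * r + 1), [], ?_⟩
    rw [h1]; simp [List.append_assoc]
  have hu0ne : a1 ++ Q.s (2 * r + 2) ≠ Q.s (2 * r + 1) ++ Q.s (2 * r + 2) := by
    intro he
    have hl := congrArg List.length he
    rw [h1] at hl
    simp only [List.length_append] at hl
    have := len_pos (P.ne_nil (2 * r + 1))
    omega
  have hu0 : M.Nonzero (a1 ++ Q.s (2 * r + 2)) :=
    Q.tile_alive' (2 * r + 1) (2 * r + 2) rfl hu0inf hu0ne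
  have hcomp : M.toQuiverData.Composable (P.s (2 * r + 1)) (a1 ++ Q.s (2 * r + 2)) := by
    rw [comp_congr_right hA1 (List.prefix_append _ _)]
    have hq := (Q.nonzero (2 * r + 1)).1
    rw [h1] at hq
    exact (path_append.mp hq).2.2
  have hdead : M.IsZero (P.s (2 * r + 1) ++ (a1 ++ Q.s (2 * r + 2))) := by
    have he : P.s (2 * r + 1) ++ (a1 ++ Q.s (2 * r + 2)) =
        Q.s (2 * r + 1) ++ Q.s (2 * r + 2) := by
      rw [h1]; simp [List.append_assoc]
    rw [he]; exact Q.tile_zero' (2 * r + 1) (2 * r + 2) rfl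
  have h2 : P.s (2 * r + 2) <+: a1 ++ Q.s (2 * r + 2) :=
    pp_min_q (P.pair' (2 * r + 1) (2 * r + 2) rfl) _ (append_ne_nil_left' hA1) hu0 hcomp hdead
  have hgt : ¬ (P.s (2 * r + 2)).length ≤ a1.length := by
    intro hle
    have hpa : P.s (2 * r + 2) <+: a1 :=
      List.prefix_of_prefix_length_le h2 (List.prefix_append _ _) hle
    obtain ⟨w, hw⟩ := hpa
    apply (Q.nonzero (2 * r + 1)).2
    refine zero_mono ⟨[], w, ?_⟩ (P.tile_zero' (2 * r + 1) (2 * r + 2) rfl)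
    rw [h1, ← hw]; simp [List.append_assoc]
  push_neg at hgt
  have hApre : a1 <+: P.s (2 * r + 2) :=
    List.prefix_of_prefix_length_le (List.prefix_append _ _) h2 (le_of_lt hgt)
  obtain ⟨w, hw⟩ := hApre
  have hwpre : w <+: Q.s (2 * r + 2) := prefix_append_cancel (by rw [hw]; exact h2)
  have hwne : w ≠ [] := by
    intro h0
    rw [h0, List.append_nil] at hw
    apply (Q.nonzero (2 * r + 1)).2
    rw [h1, hw]
    exact P.tile_zero' (2 * r + 1) (2 * r + 2) rfl
  by_cases hcase : w = Q.s (2 * r + 2)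
  · left; rw [← hw, hcase]
  · right
    obtain ⟨γ, hγ⟩ := hwpre
    have hγne : γ ≠ [] := fun h0 => hcase (by rw [← hγ, h0, List.append_nil])
    refine ⟨w, γ, hwne, hγne, hw.symm, hγ.symm, ?_⟩
    have he : P.s (2 * r + 2) ++ γ = a1 ++ Q.s (2 * r + 2) := by
      rw [← hw, ← hγ]; simp [List.append_assoc]
    rw [he]; exact hu0

/-! shared-regime perfect pairs -/

theorem SB_alive {j : ℕ} {a2 : List E} (ha2 : a2 ≠ [])
    (h3 : Q.s (j + 2) = P.s (j + 2) ++ a2) :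
    M.Nonzero (Q.s (j + 1) ++ P.s (j + 2)) := by
  refine Q.tile_alive' (j + 1) (j + 2) rfl ⟨[], a2, by rw [h3]; simp [List.append_assoc]⟩ ?_
  intro he
  have hl := congrArg List.length he
  rw [h3] at hl
  simp only [List.length_append] at hl
  have := len_pos ha2
  omega

theorem pairSA {j : ℕ} {a1 a2 : List E} (ha1 : a1 ≠ []) (ha2 : a2 ≠ [])
    (h1 : Q.s j = P.s j ++ a1)
    (h2 : P.s (j + 1) = a1 ++ Q.s (j + 1))
    (h3 : Q.s (j + 2) = P.s (j + 2) ++ a2) :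
    M.PerfectPair a1 (Q.s (j + 1) ++ P.s (j + 2)) := by
  refine ⟨ha1, append_ne_nil_left' (Q.ne_nil (j + 1)), ?_, SB_alive ha2 h3, ?_, ?_, ?_, ?_⟩
  · have hpre : a1 <+: P.s (j + 1) := ⟨Q.s (j + 1), h2.symm⟩
    exact nonzero_infix (P.nonzero (j + 1)) hpre.isInfix
  · rw [comp_congr_right (Q.ne_nil (j + 1)) (List.prefix_append _ _)]
    have hp := (P.nonzero (j + 1)).1
    rw [h2] at hp
    exact (path_append.mp hp).2.2
  · have he : a1 ++ (Q.s (j + 1) ++ P.s (j + 2)) = P.s (j + 1) ++ P.s (j + 2) := by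
      rw [h2]; simp [List.append_assoc]
    rw [he]; exact P.tile_zero' (j + 1) (j + 2) rfl
  · intro u hu hnzu hcomp hdead
    have hq1 : M.IsZero (Q.s j ++ u) := by
      refine zero_mono ⟨P.s j, [], ?_⟩ hdead
      rw [h1]; simp [List.append_assoc]
    have hsufa : a1 <:+ Q.s j := ⟨P.s j, h1.symm⟩
    have hc2 : M.toQuiverData.Composable (Q.s j) u :=
      (comp_congr_left ha1 hsufa).mpr hcomp
    have hQk : Q.s (j + 1) <+: u := pp_min_q (Q.pair j) u hu hnzu hc2 hq1
    obtain ⟨u₂, hu₂⟩ := hQk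
    have hu₂ne : u₂ ≠ [] := by
      intro h0
      rw [h0, List.append_nil] at hu₂
      apply (P.nonzero (j + 1)).2
      rw [h2, hu₂]
      exact hdead
    have hsufu : u₂ <:+ u := ⟨Q.s (j + 1), hu₂⟩
    have halive : M.Nonzero u₂ := nonzero_infix hnzu hsufu.isInfix
    have hsufQP : Q.s (j + 1) <:+ P.s (j + 1) := ⟨a1, h2.symm⟩
    have hc3 : M.toQuiverData.Composable (P.s (j + 1)) u₂ := by
      rw [comp_congr_left (Q.ne_nil (j + 1)) hsufQP]
      have hupath : M.toQuiverData.IsPath (Q.s (j + 1) ++ u₂) := by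
        rw [hu₂]; exact hnzu.1
      exact (path_append.mp hupath).2.2
    have hdead2 : M.IsZero (P.s (j + 1) ++ u₂) := by
      have he : P.s (j + 1) ++ u₂ = a1 ++ u := by
        rw [← hu₂, h2]; simp [List.append_assoc]
      rw [he]; exact hdead
    have h7 := pp_min_q (P.pair' (j + 1) (j + 2) rfl) u₂ hu₂ne halive hc3 hdead2
    obtain ⟨w, hw⟩ := h7
    refine ⟨w, ?_⟩
    rw [← hu₂, ← hw]; simp [List.append_assoc]
  · intro v hv hnzv hcomp hdead
    rw [comp_congr_right (Q.ne_nil (j + 1)) (List.prefix_append _ _)] at hcomp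
    by_cases hz : M.IsZero (v ++ Q.s (j + 1))
    · have h8 := pp_min_p (Q.pair j) v hv hnzv hcomp hz
      have hsufa : a1 <:+ Q.s j := ⟨P.s j, h1.symm⟩
      exact hsufa.trans h8
    · have hnz2 : M.Nonzero (v ++ Q.s (j + 1)) :=
        ⟨path_append.mpr ⟨hnzv.1, (Q.nonzero (j + 1)).1, hcomp⟩, hz⟩
      have hsufQP : Q.s (j + 1) <:+ P.s (j + 1) := ⟨a1, h2.symm⟩
      have hc3 : M.toQuiverData.Composable (v ++ Q.s (j + 1)) (P.s (j + 2)) := by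
        rw [comp_congr_left (Q.ne_nil (j + 1)) (List.suffix_append v _)]
        rw [← comp_congr_left (Q.ne_nil (j + 1)) hsufQP]
        exact pp_comp (P.pair' (j + 1) (j + 2) rfl)
      have hdead2 : M.IsZero ((v ++ Q.s (j + 1)) ++ P.s (j + 2)) := by
        rw [List.append_assoc]; exact hdead
      have h8 := pp_min_p (P.pair' (j + 1) (j + 2) rfl) _ (append_ne_nil_left' hv) hnz2 hc3 hdead2
      rw [h2] at h8
      exact suffix_append_cancel h8

theorem pairSB {j : ℕ} {a2 : List E} (ha2 : a2 ≠ [])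
    (h3 : Q.s (j + 2) = P.s (j + 2) ++ a2)
    (h4 : P.s (j + 3) = a2 ++ Q.s (j + 3)) :
    M.PerfectPair (Q.s (j + 1) ++ P.s (j + 2)) a2 := by
  refine ⟨append_ne_nil_left' (Q.ne_nil (j + 1)), ha2, SB_alive ha2 h3, ?_, ?_, ?_, ?_, ?_⟩
  · have hpre : a2 <+: P.s (j + 3) := ⟨Q.s (j + 3), h4.symm⟩
    exact nonzero_infix (P.nonzero (j + 3)) hpre.isInfix
  · rw [comp_congr_left (P.ne_nil (j + 2)) (List.suffix_append _ _)]
    have hq := (Q.nonzero (j + 2)).1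
    rw [h3] at hq
    exact (path_append.mp hq).2.2
  · have he : (Q.s (j + 1) ++ P.s (j + 2)) ++ a2 = Q.s (j + 1) ++ Q.s (j + 2) := by
      rw [h3]; simp [List.append_assoc]
    rw [he]; exact Q.tile_zero' (j + 1) (j + 2) rfl
  · intro u hu hnzu hcomp hdead
    rw [comp_congr_left (P.ne_nil (j + 2)) (List.suffix_append (Q.s (j + 1)) _)] at hcomp
    by_cases hz : M.IsZero (P.s (j + 2) ++ u)
    · have h7 := pp_min_q (P.pair' (j + 2) (j + 3) rfl) u hu hnzu hcomp hz
      have hpre : a2 <+: P.s (j + 3) := ⟨Q.s (j + 3), h4.symm⟩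
      exact hpre.trans h7
    · have hnz2 : M.Nonzero (P.s (j + 2) ++ u) :=
        ⟨path_append.mpr ⟨(P.nonzero (j + 2)).1, hnzu.1, hcomp⟩, hz⟩
      have hpreP : P.s (j + 2) <+: Q.s (j + 2) := ⟨a2, h3.symm⟩
      have hcQ : M.toQuiverData.Composable (Q.s (j + 1)) (P.s (j + 2) ++ u) := by
        rw [comp_congr_right (P.ne_nil (j + 2)) (List.prefix_append _ _)]
        rw [← comp_congr_right (P.ne_nil (j + 2)) hpreP]
        exact pp_comp (Q.pair' (j + 1) (j + 2) rfl)
      have hdQ : M.IsZero (Q.s (j + 1) ++ (P.s (j + 2) ++ u)) := by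
        rw [← List.append_assoc]; exact hdead
      have h7 := pp_min_q (Q.pair' (j + 1) (j + 2) rfl) _
        (append_ne_nil_left' (P.ne_nil (j + 2))) hnz2 hcQ hdQ
      rw [h3] at h7
      exact prefix_append_cancel h7
  · intro v hv hnzv hcomp hdead
    have hd1 : M.IsZero (v ++ P.s (j + 3)) := by
      refine zero_mono ⟨[], Q.s (j + 3), ?_⟩ hdead
      rw [h4]; simp [List.append_assoc]
    have hc1 : M.toQuiverData.Composable v (P.s (j + 3)) := by
      rw [comp_congr_right ha2 (⟨Q.s (j + 3), h4.symm⟩ : a2 <+: P.s (j + 3))]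
      exact hcomp
    have h8 := pp_min_p (P.pair' (j + 2) (j + 3) rfl) v hv hnzv hc1 hd1
    obtain ⟨v₃, hv₃⟩ := h8
    have hv₃ne : v₃ ≠ [] := by
      intro h0
      rw [h0, List.nil_append] at hv₃
      apply (Q.nonzero (j + 2)).2
      rw [h3, hv₃]
      exact hdead
    have hpre3 : v₃ <+: v := ⟨P.s (j + 2), hv₃⟩
    have hnz3 : M.Nonzero v₃ := nonzero_infix hnzv hpre3.isInfix
    have hc2 : M.toQuiverData.Composable v₃ (Q.s (j + 2)) := by
      rw [comp_congr_right (P.ne_nil (j + 2)) (⟨a2, h3.symm⟩ : P.s (j + 2) <+: Q.s (j + 2))]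
      have hvpath : M.toQuiverData.IsPath (v₃ ++ P.s (j + 2)) := by
        rw [hv₃]; exact hnzv.1
      exact (path_append.mp hvpath).2.2
    have hd2 : M.IsZero (v₃ ++ Q.s (j + 2)) := by
      have he : v₃ ++ Q.s (j + 2) = v ++ a2 := by
        rw [← hv₃, h3]; simp [List.append_assoc]
      rw [he]; exact hdead
    have h8b := pp_min_p (Q.pair' (j + 1) (j + 2) rfl) v₃ hv₃ne hnz3 hc2 hd2
    obtain ⟨w, hw⟩ := h8b
    refine ⟨w, ?_⟩
    rw [← hv₃, ← hw]; simp [List.append_assoc]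

end Shared


/-! ### Assembling the merged chain (shared case) -/

section SharedMain

variable (P Q : Chain M)

noncomputable def mergedShared (a0 : List E) (R : ℕ) : ℕ → List E := fun i =>
  if Even i then Alp P Q a0 (R + i / 2 + 1)
  else Q.s (2 * (R + i / 2) + 2) ++ P.s (2 * (R + i / 2) + 3)

variable {P Q}

theorem alp_per {a0 : List E} (hall : ∀ r, INVr P Q a0 r) (r : ℕ) :
    Alp P Q a0 (r + P.n * Q.n) = Alp P Q a0 r := by
  have i1 := (hall r).2
  have i2 := (hall (r + P.n * Q.n)).2
  have eP : 2 * (r + P.n * Q.n) = 2 * r + 2 * (P.n * Q.n) := by ring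
  rw [eP, P.per_dvd ⟨2 * Q.n, by ring⟩, Q.per_dvd ⟨2 * P.n, by ring⟩] at i2
  exact List.append_cancel_right (i2.symm.trans i1)

theorem mergedShared_per {a0 : List E} (hall : ∀ r, INVr P Q a0 r) (R i : ℕ) :
    mergedShared P Q a0 R (i + 2 * (P.n * Q.n)) = mergedShared P Q a0 R i := by
  have hEv : Even (i + 2 * (P.n * Q.n)) ↔ Even i := by simp [Nat.even_add]
  unfold mergedShared
  by_cases h : Even i
  · rw [if_pos h, if_pos (hEv.mpr h)]
    have e : R + (i + 2 * (P.n * Q.n)) / 2 + 1 = (R + i / 2 + 1) + P.n * Q.n := by omega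
    rw [e, alp_per hall]
  · rw [if_neg h, if_neg (fun hc => h (hEv.mp hc))]
    have e1 : 2 * (R + (i + 2 * (P.n * Q.n)) / 2) + 2 =
        (2 * (R + i / 2) + 2) + 2 * (P.n * Q.n) := by omega
    have e2 : 2 * (R + (i + 2 * (P.n * Q.n)) / 2) + 3 =
        (2 * (R + i / 2) + 3) + 2 * (P.n * Q.n) := by omega
    rw [e1, e2, Q.per_dvd ⟨2 * P.n, by ring⟩, P.per_dvd ⟨2 * Q.n, by ring⟩]

theorem mergedShared_pair {a0 : List E} (hall : ∀ r, INVr P Q a0 r) (R i : ℕ) :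
    M.PerfectPair (mergedShared P Q a0 R i) (mergedShared P Q a0 R (i + 1)) := by
  have hstep : ∀ r, Q.s (2 * r + 1) = P.s (2 * r + 1) ++ Alp P Q a0 (r + 1) ∧
      Alp P Q a0 (r + 1) ≠ [] := fun r => sharedStep1 (hall r)
  unfold mergedShared
  rcases Nat.even_or_odd i with he | ho
  · obtain ⟨l, rfl⟩ := he
    have hl2 : (l + l) / 2 = l := by omega
    have hl3 : (l + l + 1) / 2 = l := by omega
    rw [if_pos ⟨l, rfl⟩, if_neg (by simp [Nat.even_add_one, parity_simps]), hl2, hl3]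
    -- pairSA with j := 2*(R+l)+1
    have h1 := (hstep (R + l)).1
    have ha1 := (hstep (R + l)).2
    have h2 := (hall (R + l + 1)).2
    have h3 := (hstep (R + l + 1)).1
    have ha2 := (hstep (R + l + 1)).2
    have e2 : 2 * (R + l + 1) = (2 * (R + l) + 1) + 1 := by ring
    have e3 : 2 * (R + l + 1) + 1 = (2 * (R + l) + 1) + 2 := by ring
    rw [e2] at h2
    rw [e3] at h3
    have eA : R + l + 1 + 1 = R + l + 2 := by ring
    rw [eA] at h3 ha2
    have goal2 : 2 * (R + l) + 2 = (2 * (R + l) + 1) + 1 := by ring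
    have goal3 : 2 * (R + l) + 3 = (2 * (R + l) + 1) + 2 := by ring
    rw [goal2, goal3]
    exact pairSA ha1 ha2 h1 h2 h3
  · obtain ⟨l, rfl⟩ := ho
    have hl2 : (2 * l + 1) / 2 = l := by omega
    have hl3 : (2 * l + 1 + 1) / 2 = l + 1 := by omega
    rw [if_neg (by simp [Nat.even_add_one, parity_simps]), if_pos (by
      refine Nat.even_add_one.mpr ?_; simp [parity_simps]), hl2, hl3]
    -- pairSB with j := 2*(R+l)+1
    have h2 := (hall (R + l + 1)).2
    have h3 := (hstep (R + l + 1)).1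
    have ha2 := (hstep (R + l + 1)).2
    have h4 := (hall (R + l + 2)).2
    have e2 : 2 * (R + l + 1) = (2 * (R + l) + 1) + 1 := by ring
    rw [e2] at h2
    have e3 : 2 * (R + l + 1) + 1 = (2 * (R + l) + 1) + 2 := by ring
    rw [e3] at h3
    have eA : R + l + 1 + 1 = R + l + 2 := by ring
    rw [eA] at h3 ha2
    have e4 : 2 * (R + l + 2) = (2 * (R + l) + 1) + 3 := by ring
    rw [e4] at h4
    have goal2 : 2 * (R + l) + 2 = (2 * (R + l) + 1) + 1 := by ring
    have goal3 : 2 * (R + l) + 3 = (2 * (R + l) + 1) + 2 := by ring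
    have goalA : R + (l + 1) + 1 = R + l + 2 := by ring
    rw [goal2, goal3, goalA]
    exact pairSB ha2 h3 h4

theorem shared_main {a0 : List E} (hall : ∀ r, INVr P Q a0 r) : M.IsPerfect a0 := by
  have hN : 0 < P.n * Q.n := Nat.mul_pos P.npos Q.npos
  obtain ⟨R, hR⟩ : ∃ R, R + 1 = 2 * (P.n * Q.n) := ⟨2 * (P.n * Q.n) - 1, by omega⟩
  refine ⟨2 * (P.n * Q.n), mergedShared P Q a0 R, by omega, ?_,
    fun i => mergedShared_per hall R i, fun i => mergedShared_pair hall R i⟩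
  show mergedShared P Q a0 R 0 = a0
  unfold mergedShared
  rw [if_pos Even.zero]
  have e : R + 0 / 2 + 1 = (0 + P.n * Q.n) + P.n * Q.n := by omega
  rw [e, alp_per hall, alp_per hall]
  rfl

end SharedMain


end NoOverlapAux

/-- there is no overlap between any two co-elementary perfect
paths of a monomial algebra. -/
theorem no_overlap_coelementary {V E : Type} (M : MonomialData V E)
    (p q : List E) (hp : M.CoElementary p) (hq : M.CoElementary q) :
    ¬ M.Overlap p q := by
  open NoOverlapAux in
  rintro ⟨x, p', q', hx, hpeq, hqeq, hnz, hpq⟩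
  obtain ⟨P, hP0⟩ := chainOf hp.1
  obtain ⟨Q, hQ0⟩ := chainOf hq.1
  by_cases hp' : p' = []
  · -- `p` is a prefix of `q`
    subst hp'
    rw [List.nil_append] at hpeq
    by_cases hq' : q' = []
    · have hpq' : p = q := by rw [hpeq, hqeq, hq', List.append_nil]
      exact (hpq hpq').1 rfl
    · apply hq.2
      refine ⟨p, hp.1, ⟨q', by rw [hpeq, hqeq]⟩, ?_⟩
      intro he
      rw [hpeq, hqeq] at he
      apply hq'
      have hl := congrArg List.length he
      simp only [List.length_append] at hl
      exact List.eq_nil_of_length_eq_zero (by omega)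
  · by_cases hq' : q' = []
    · -- shared-regime case: `q` is a proper suffix of `p`
      subst hq'
      rw [List.append_nil] at hqeq
      have hpq2 : P.s 0 = p' ++ Q.s 0 := by rw [hP0, hQ0, hpeq, hqeq]
      have hINV0 : INVr P Q p' 0 := by
        refine ⟨hp', ?_⟩
        have e : 2 * 0 = 0 := rfl
        rw [e]
        exact hpq2
      by_cases hall : ∀ r, INVr P Q p' r
      · have hperf := shared_main hall
        apply hp.2
        refine ⟨p', hperf, ⟨x, hpeq.symm⟩, ?_⟩
        intro he
        apply hx
        have hl := congrArg List.length hpeq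
        rw [he] at hl
        simp only [List.length_append] at hl
        exact List.eq_nil_of_length_eq_zero (by omega)
      · push_neg at hall
        obtain ⟨r0, hr0⟩ := hall
        have hex : ∃ r, INVr P Q p' r ∧ ¬ INVr P Q p' (r + 1) := by
          by_contra hc
          push_neg at hc
          apply hr0
          have hall' : ∀ r, INVr P Q p' r := by
            intro r
            induction r with
            | zero => exact hINV0
            | succ r ih => exact hc r ih
          exact hall' r0
        obtain ⟨r, hr, hrn⟩ := hex
        have hstep1 := sharedStep1 hr
        rcases sharedStep2 hr hstep1.1 hstep1.2 with hsh | ⟨β, γ, hβ, hγ, hPs, hQs, hUs⟩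
        · exact hrn ⟨hstep1.2, by rw [show 2 * (r + 1) = 2 * r + 2 by ring]; exact hsh⟩
        · have hGood : Good (P.shift (2 * r + 2)) (Q.shift (2 * r + 2)) 0
              (Alp P Q p' (r + 1), β, γ) := by
            refine ⟨hstep1.2, hβ, hγ, ?_, ?_, ?_⟩
            · show P.s (2 * r + 2 + 0) = _
              rw [Nat.add_zero]
              exact hPs
            · show Q.s (2 * r + 2 + 0) = _
              rw [Nat.add_zero]
              exact hQs
            · show M.Nonzero (P.s (2 * r + 2 + 0) ++ γ)
              rw [Nat.add_zero]
              exact hUs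
          obtain ⟨K, hK1, hKe⟩ : ∃ K, 1 ≤ K ∧ (2 * r + 2) + K = P.n * (2 * r + 3) := by
            have h1 : 2 * r + 3 ≤ P.n * (2 * r + 3) := Nat.le_mul_of_pos_left _ P.npos
            exact ⟨P.n * (2 * r + 3) - (2 * r + 2), by omega, by omega⟩
          obtain ⟨a, b, hane, hbne, hab, haperf⟩ := strict_main hGood hK1
          have hPk : (P.shift (2 * r + 2)).s K = p := by
            show P.s (2 * r + 2 + K) = p
            rw [hKe]
            have e : P.n * (2 * r + 3) = 0 + P.n * (2 * r + 3) := by ring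
            rw [e, P.per_mul, hP0]
          have habp : a ++ b = p := hab.symm.trans hPk
          apply hp.2
          refine ⟨a, haperf, ⟨b, habp⟩, ?_⟩
          intro he
          apply hbne
          have hl := congrArg List.length habp
          rw [he] at hl
          simp only [List.length_append] at hl
          exact List.eq_nil_of_length_eq_zero (by omega)
    · -- strict case
      have hGood : Good P Q 0 (p', x, q') := by
        refine ⟨hp', hx, hq', ?_, ?_, ?_⟩
        · rw [hP0, hpeq]
        · rw [hQ0, hqeq]
        · rw [hP0, hpeq]
          exact hnz
      have hK1 : 1 ≤ P.n * Q.n := Nat.mul_pos P.npos Q.npos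
      obtain ⟨a, b, hane, hbne, hab, haperf⟩ := strict_main hGood hK1
      have hPk : P.s (P.n * Q.n) = p := by
        have e : P.n * Q.n = 0 + P.n * Q.n := by ring
        rw [e, P.per_mul, hP0]
      have habp : a ++ b = p := hab.symm.trans hPk
      apply hp.2
      refine ⟨a, haperf, ⟨b, habp⟩, ?_⟩
      intro he
      apply hbne
      have hl := congrArg List.length habp
      rw [he] at hl
      simp only [List.length_append] at hl
      exact List.eq_nil_of_length_eq_zero (by omega)
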